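/- Let n ≥ 2, let a_1, …, a_n be elements of a commutative ring, let c_0 = 1 and c_1, c_2, … be ring elements with c_i = 0 for i < 0. Define K_{i,j} = h_i(a_1,…,a_{n−j+1})·(c_1 c_{j−i−1} − c_{j−i}) + (a_1 + ⋯ + a_n)·h_{i−1}(a_1,…,a_{n−j+1})·c_{j−i}, where h_i denotes the i-th complete homogeneous symmetric function (h_0 = 1, h_i = 0 for i < 0), and let e_r^{(k)} denote the r-th elementary symmetric function of a_1, …, a_k. Then for all j = 2, …, n and all m = 2, …, j, ∑_{r=0}^{m} (−1)^r · e_r^{(n−j+r)} · K_{m−r, j−r} = 0. -/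

import Mathlib

/-- The `r`-th elementary symmetric function of the first `k` variables `a 0, …, a (k-1)`. -/
def esymmTrunc {R : Type*} [CommRing R] (a : ℕ → R) (k r : ℕ) : R :=
  ∑ s ∈ (Finset.range k).powersetCard r, ∏ t ∈ s, a t

/-- The `i`-th complete homogeneous symmetric function of the first `j` variables
`a 0, …, a (j-1)`, with `h_i = 0` for `i < 0` (the index `i` ranges over `ℤ`). -/
def hsymmTruncZ {R : Type*} [CommRing R] (a : ℕ → R) (j : ℕ) (i : ℤ) : R :=
  if 0 ≤ i then
    ∑ d ∈ Finset.Nat.antidiagonalTuple j i.toNat, ∏ k : Fin j, a (k : ℕ) ^ d k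
  else 0

/-- The quantity `K_{i,j} = h_i(a_1,…,a_{n−j+1})·(c_1 c_{j−i−1} − c_{j−i})
 + (a_1 + ⋯ + a_n)·h_{i−1}(a_1,…,a_{n−j+1})·c_{j−i}`. -/
def Kcoef {R : Type*} [CommRing R] (n : ℕ) (a : ℕ → R) (c : ℤ → R) (i j : ℕ) : R :=
  hsymmTruncZ a (n - j + 1) (i : ℤ) * (c 1 * c ((j : ℤ) - i - 1) - c ((j : ℤ) - i)) +
    (∑ r ∈ Finset.range n, a r) * hsymmTruncZ a (n - j + 1) ((i : ℤ) - 1) * c ((j : ℤ) - i)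


section Aux
open Finset
variable {R : Type*} [CommRing R] (a : ℕ → R)

lemma hsymm_snoc (j n : ℕ) :
    (∑ d ∈ Finset.Nat.antidiagonalTuple (j+1) n, ∏ k : Fin (j+1), a k ^ d k)
      = ∑ p ∈ Finset.HasAntidiagonal.antidiagonal n, a j ^ p.1 *
          ∑ d ∈ Finset.Nat.antidiagonalTuple j p.2, ∏ k : Fin j, a k ^ d k := by
  simp_rw [Finset.mul_sum]
  rw [Finset.sum_sigma']
  refine Finset.sum_nbij' (fun d => ⟨(d (Fin.last j), ∑ k : Fin j, d k.castSucc), Fin.init d⟩)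
    (fun x => Fin.snoc x.2 x.1.1) ?_ ?_ ?_ ?_ ?_
  · intro d hd
    rw [Finset.Nat.mem_antidiagonalTuple] at hd
    rw [Finset.mem_sigma]
    constructor
    · rw [Finset.HasAntidiagonal.mem_antidiagonal, ← hd, Fin.sum_univ_castSucc]; ring
    · exact Finset.Nat.mem_antidiagonalTuple.mpr rfl
  · intro x hx
    rw [Finset.mem_sigma, Finset.HasAntidiagonal.mem_antidiagonal, Finset.Nat.mem_antidiagonalTuple] at hx
    rw [Finset.Nat.mem_antidiagonalTuple, Fin.sum_univ_castSucc]
    simp only [Fin.snoc_castSucc, Fin.snoc_last]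
    rw [hx.2]; omega
  · intro d hd
    exact Fin.snoc_init_self d
  · intro x hx
    rw [Finset.mem_sigma, Finset.Nat.mem_antidiagonalTuple] at hx
    refine Sigma.ext ?_ (heq_of_eq ?_)
    · simp only [Fin.snoc_last, Fin.snoc_castSucc]
      rw [hx.2]
    · simp [Fin.init_snoc]
  · intro d hd
    rw [Fin.prod_univ_castSucc]
    simp only [Fin.init, Fin.coe_castSucc, Fin.val_last]
    ring

lemma hZ_ofNat (j n : ℕ) :
    hsymmTruncZ a j (n : ℤ)
      = ∑ d ∈ Finset.Nat.antidiagonalTuple j n, ∏ k : Fin j, a (k : ℕ) ^ d k := by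
  simp [hsymmTruncZ]

lemma hZ_neg {i : ℤ} (h : i < 0) : hsymmTruncZ a j i = 0 := by
  simp [hsymmTruncZ, not_le.mpr h]

lemma hZ_zero (j : ℕ) : hsymmTruncZ a j 0 = 1 := by
  rw [show (0:ℤ) = ((0:ℕ):ℤ) from rfl, hZ_ofNat, Finset.Nat.antidiagonalTuple_zero_right]
  simp

lemma hZ_zero_vars {i : ℤ} (h : 0 < i) : hsymmTruncZ a 0 i = 0 := by
  obtain ⟨n, rfl⟩ := Int.eq_ofNat_of_zero_le h.le
  obtain ⟨n, rfl⟩ : ∃ m, n = m + 1 := ⟨n - 1, by omega⟩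
  rw [hZ_ofNat, Finset.Nat.antidiagonalTuple_zero_succ]
  simp

lemma hZ_succ (j : ℕ) (i : ℤ) :
    hsymmTruncZ a (j+1) i = hsymmTruncZ a j i + a j * hsymmTruncZ a (j+1) (i-1) := by
  rcases lt_trichotomy i 0 with h | rfl | h
  · rw [hZ_neg a h, hZ_neg a h, hZ_neg a (by omega)]; ring
  · rw [hZ_zero, hZ_zero, hZ_neg a (by omega)]; ring
  · obtain ⟨n, rfl⟩ := Int.eq_ofNat_of_zero_le h.le
    obtain ⟨n, rfl⟩ : ∃ m, n = m + 1 := ⟨n - 1, by omega⟩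
    have h1 : ((n:ℤ) + 1) - 1 = ((n:ℕ):ℤ) := by push_cast; ring
    rw [show ((n+1:ℕ):ℤ) = ((n+1:ℕ):ℤ) from rfl, hZ_ofNat, hZ_ofNat]
    rw [show ((n+1:ℕ):ℤ) - 1 = ((n:ℕ):ℤ) by push_cast; ring, hZ_ofNat]
    rw [hsymm_snoc, hsymm_snoc, Finset.Nat.antidiagonal_succ, Finset.sum_cons]
    rw [Finset.sum_map, Finset.mul_sum]
    simp only [Function.Embedding.coe_prodMap, Function.Embedding.coeFn_mk,
      Function.Embedding.refl_apply, Prod.map_fst, Prod.map_snd, pow_zero, one_mul,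
      Nat.succ_eq_add_one, pow_succ]
    rw [Finset.mul_sum]
    congr 1
    exact Finset.sum_congr rfl fun p hp => by ring

lemma esymm_zero (k : ℕ) : esymmTrunc a k 0 = 1 := by simp [esymmTrunc]

lemma esymm_gt {k r : ℕ} (h : k < r) : esymmTrunc a k r = 0 := by
  rw [esymmTrunc, Finset.powersetCard_eq_empty.mpr (by simpa using h), Finset.sum_empty]

lemma esymm_succ (k r : ℕ) :
    esymmTrunc a (k+1) (r+1) = esymmTrunc a k (r+1) + a k * esymmTrunc a k r := by
  unfold esymmTrunc
  rw [Finset.range_add_one, Finset.powersetCard_succ_insert (Finset.notMem_range_self)]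
  rw [Finset.sum_union]
  · congr 1
    rw [Finset.sum_image, Finset.mul_sum]
    · refine Finset.sum_congr rfl fun s hs => ?_
      rw [Finset.mem_powersetCard] at hs
      rw [Finset.prod_insert (fun hk => Finset.notMem_range_self (hs.1 hk))]
    · intro s hs t ht hst
      rw [Finset.mem_coe, Finset.mem_powersetCard] at hs ht
      have hks : k ∉ s := fun hk => Finset.notMem_range_self (hs.1 hk)
      have hkt : k ∉ t := fun hk => Finset.notMem_range_self (ht.1 hk)
      rwa [Finset.insert_erase_invOn.2.injOn.eq_iff] at hst <;> simp [hks, hkt]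
  · rw [Finset.disjoint_left]
    intro s hs hs'
    rw [Finset.mem_powersetCard] at hs
    obtain ⟨t, ht, rfl⟩ := Finset.mem_image.mp hs'
    rw [Finset.mem_powersetCard] at ht
    exact Finset.notMem_range_self (hs.1 (Finset.mem_insert_self k t))

/-- auxiliary telescoping sequence -/
def Uaux {R : Type*} [CommRing R] (a : ℕ → R) (k : ℕ) (m : ℤ) : ℕ → R
  | 0 => 0
  | (s+1) => (-1)^(s+1) * a (k+s+1) * esymmTrunc a (k+s+1) s * hsymmTruncZ a (k+s+2) (m-(s+1))

lemma A_base (m : ℕ) (hm : 1 ≤ m) :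
    ∑ r ∈ Finset.range (m+1),
      (-1:R)^r * esymmTrunc a r r * hsymmTruncZ a (r+1) ((m:ℤ)-r) = 0 := by
  have key : ∀ r : ℕ, (-1:R)^r * esymmTrunc a r r * hsymmTruncZ a (r+1) ((m:ℤ)-r)
      = (fun r : ℕ => (-1:R)^r * esymmTrunc a r r * hsymmTruncZ a r ((m:ℤ)-r)) r
        - (fun r : ℕ => (-1:R)^r * esymmTrunc a r r * hsymmTruncZ a r ((m:ℤ)-r)) (r+1) := by
    intro r
    simp only []
    rw [hZ_succ a r ((m:ℤ)-r), esymm_succ a r r, esymm_gt a (Nat.lt_succ_self r)]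
    push_cast
    ring_nf
  rw [Finset.sum_congr rfl fun r _ => key r, Finset.sum_range_sub']
  rw [esymm_zero, hZ_zero_vars a (by omega), hZ_neg a (by omega)]
  ring

lemma A_zero (k m : ℕ) (hm : 1 ≤ m) :
    ∑ r ∈ Finset.range (m+1),
      (-1:R)^r * esymmTrunc a (k+r) r * hsymmTruncZ a (k+r+1) ((m:ℤ)-r) = 0 := by
  induction k with
  | zero => simpa using A_base a m hm
  | succ k ih =>
    have key : ∀ r : ℕ, (-1:R)^r * esymmTrunc a (k+1+r) r * hsymmTruncZ a (k+1+r+1) ((m:ℤ)-r)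
        = (-1:R)^r * esymmTrunc a (k+r) r * hsymmTruncZ a (k+r+1) ((m:ℤ)-r)
          + (Uaux a k (m:ℤ) r - Uaux a k (m:ℤ) (r+1)) := by
      intro r
      match r with
      | 0 =>
        simp only [Uaux, pow_zero, one_mul, esymm_zero, Nat.add_zero, Nat.cast_zero, sub_zero]
        rw [show k+1+1 = (k+1)+1 from rfl, hZ_succ a (k+1) (m:ℤ)]
        push_cast
        ring_nf
      | (s+1) =>
        simp only [Uaux, show k+1+(s+1) = k+s+2 from by omega,
          show k+(s+1) = k+s+1 from by omega, show k+s+1+1 = k+s+2 from by omega,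
          show k+s+2+1 = k+s+3 from by omega, show k+s+1+2 = k+s+3 from by omega]
        push_cast
        rw [esymm_succ a (k+s+1) s, hZ_succ a (k+s+2) ((m:ℤ)-((s:ℤ)+1))]
        rw [show k+s+2+1 = k+s+3 from by omega]
        ring_nf
    rw [Finset.sum_congr rfl fun r _ => key r, Finset.sum_add_distrib, ih,
      Finset.sum_range_sub' (Uaux a k (m:ℤ))]
    simp only [Uaux]
    rw [hZ_neg a (by omega)]
    ring

lemma A_gen (k m t : ℕ) (hm : 1 ≤ m) (ht : m + 1 ≤ t) :
    ∑ r ∈ Finset.range t,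
      (-1:R)^r * esymmTrunc a (k+r) r * hsymmTruncZ a (k+r+1) ((m:ℤ)-r) = 0 := by
  rw [← Finset.sum_range_add_sum_Ico _ ht, A_zero a k m hm]
  rw [Finset.sum_eq_zero, add_zero]
  intro r hr
  rw [Finset.mem_Ico] at hr
  rw [hZ_neg a (by omega)]
  ring

end Aux

/-- For all `j = 2, …, n` and `m = 2, …, j`,
`∑_{r=0}^m (−1)^r · e_r^{(n−j+r)} · K_{m−r, j−r} = 0`. -/

theorem K_recurrence {R : Type*} [CommRing R] (n : ℕ) (hn : 2 ≤ n) (a : ℕ → R)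
    (c : ℤ → R) (hc0 : c 0 = 1) (hcneg : ∀ i : ℤ, i < 0 → c i = 0) :
    ∀ j ∈ Finset.Icc 2 n, ∀ m ∈ Finset.Icc 2 j,
      ∑ r ∈ Finset.range (m + 1),
        (-1 : R) ^ r * esymmTrunc a (n - j + r) r * Kcoef n a c (m - r) (j - r) = 0 := by
  intro j hj m hm
  rw [Finset.mem_Icc] at hj hm
  obtain ⟨hj2, hjn⟩ := hj
  obtain ⟨hm2, hmj⟩ := hm
  set S : R := ∑ r ∈ Finset.range n, a r with hS
  have key : ∀ r ∈ Finset.range (m+1),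
      (-1 : R) ^ r * esymmTrunc a (n - j + r) r * Kcoef n a c (m - r) (j - r)
      = (c 1 * c ((j:ℤ) - m - 1) - c ((j:ℤ) - m)) *
          ((-1:R)^r * esymmTrunc a ((n-j)+r) r * hsymmTruncZ a ((n-j)+r+1) ((m:ℤ)-r))
        + (S * c ((j:ℤ) - m)) *
          ((-1:R)^r * esymmTrunc a ((n-j)+r) r * hsymmTruncZ a ((n-j)+r+1) (((m-1:ℕ):ℤ)-r)) := by
    intro r hr
    rw [Finset.mem_range] at hr
    have hrm : r ≤ m := by omega
    rw [Kcoef, show n - (j - r) = n - j + r from by omega]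
    rw [show ((j - r : ℕ) : ℤ) = (j:ℤ) - r from by omega,
      show ((m - r : ℕ) : ℤ) = (m:ℤ) - r from by omega,
      show ((m - 1 : ℕ) : ℤ) = (m:ℤ) - 1 from by omega]
    rw [show (j:ℤ) - r - ((m:ℤ) - r) - 1 = (j:ℤ) - m - 1 from by ring,
      show (j:ℤ) - r - ((m:ℤ) - r) = (j:ℤ) - m from by ring,
      show (m:ℤ) - 1 - r = (m:ℤ) - r - 1 from by ring]
    ring
  rw [Finset.sum_congr rfl key, Finset.sum_add_distrib, ← Finset.mul_sum, ← Finset.mul_sum]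
  rw [A_gen a (n-j) m (m+1) (by omega) le_rfl, A_gen a (n-j) (m-1) (m+1) (by omega) (by omega)]
  ring
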